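/- Let f(α, r) = ψ₀(1 − α) + 2γ + 1/(2α) − ln α + ln r, where ψ₀ is the digamma function and γ Euler's constant. Then for every r ∈ (0,1) and every positive integer k, there exists a unique α_k ∈ (k−1, k) with f(α_k, r) = 0, and f(·, r) is strictly decreasing on (k−1, k). -/

import Mathlib

open Real Set

/-- The digamma function `ψ₀`, the logarithmic derivative of the Gamma
function. -/
noncomputable def digamma (x : ℝ) : ℝ := deriv (fun t => Real.log (Real.Gamma t)) x

/-- The quantization function `f(α, r) = ψ₀(1−α) + 2γ + 1/(2α) − ln α + ln r`. -/
noncomputable def quantF (α r : ℝ) : ℝ :=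
  digamma (1 - α) + 2 * Real.eulerMascheroniConstant + 1 / (2 * α) - Real.log α + Real.log r

namespace QuantAux

open Filter Topology

/-- Gamma recurrence, iterated. -/
lemma gamma_prod (x : ℝ) : ∀ n : ℕ, (∀ i : ℕ, i < n → x + i ≠ 0) →
    Real.Gamma (x + n) = Real.Gamma x * ∏ i ∈ Finset.range n, (x + i)
  | 0, _ => by simp
  | n + 1, h => by
    have h0 : x + n ≠ 0 := h n (lt_add_one n)
    have h1 : Real.Gamma (x + (n + 1 : ℕ)) = (x + n) * Real.Gamma (x + n) := by
      push_cast
      rw [show x + ((n : ℝ) + 1) = (x + n) + 1 by ring, Real.Gamma_add_one h0]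
    rw [h1, gamma_prod x n (fun i hi => h i (hi.trans (lt_add_one n))),
      Finset.prod_range_succ]
    ring

lemma hasDerivAt_logGamma {x : ℝ} (hx : ∀ m : ℕ, x ≠ -m) :
    HasDerivAt (fun t => Real.log (Real.Gamma t)) (digamma x) x := by
  have hd : DifferentiableAt ℝ (fun t => Real.log (Real.Gamma t)) x :=
    (Real.differentiableAt_Gamma hx).log (Real.Gamma_ne_zero hx)
  simpa [digamma] using hd.hasDerivAt

lemma pos_nonpole {x : ℝ} (hx : 0 < x) : ∀ m : ℕ, x ≠ -m := by
  intro m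
  have : -(m : ℝ) ≤ 0 := neg_nonpos.mpr m.cast_nonneg
  exact (lt_of_le_of_lt this hx).ne'

lemma digamma_monotone : MonotoneOn digamma (Set.Ioi (0 : ℝ)) := by
  have h := Real.convexOn_log_Gamma.monotoneOn_deriv (fun x hx =>
    (Real.differentiableAt_Gamma (pos_nonpole hx)).log
      (Real.Gamma_ne_zero (pos_nonpole hx)))
  exact h


/-- Decomposed version of the antiderivative of `quantF · r` on `(n, n+1)`. -/
noncomputable def Fn (n : ℕ) (r : ℝ) (α : ℝ) : ℝ :=
  -Real.log (Real.Gamma ((n : ℝ) + 2 - α)) + Real.log ((n : ℝ) + 1 - α)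
    + ∑ i ∈ Finset.range n, Real.log (1 - α + (i : ℝ))
    + (2 * Real.eulerMascheroniConstant + Real.log r) * α
    + (1 / 2) * Real.log α + (α - α * Real.log α)

/-- The derivative of `Fn` obtained by direct differentiation. -/
noncomputable def Dn (n : ℕ) (r : ℝ) (α : ℝ) : ℝ :=
  digamma ((n : ℝ) + 2 - α) - 1 / ((n : ℝ) + 1 - α)
    - ∑ i ∈ Finset.range n, 1 / (1 - α + (i : ℝ))
    + 2 * Real.eulerMascheroniConstant + 1 / (2 * α) - Real.log α + Real.log r

section facts
variable {n : ℕ} {α : ℝ} (hα : α ∈ Set.Ioo (n : ℝ) ((n : ℝ) + 1))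

include hα

lemma alpha_pos : 0 < α := lt_of_le_of_lt n.cast_nonneg hα.1

lemma one_sub_nonpole : ∀ m : ℕ, (1 : ℝ) - α ≠ -m := by
  intro m hm
  have hα' : α = (m : ℝ) + 1 := by linarith
  obtain ⟨h1, h2⟩ := hα
  rw [hα'] at h1 h2
  have hk1 : n < m + 1 := by exact_mod_cast h1
  have hk2 : m + 1 < n + 1 := by exact_mod_cast h2
  omega

lemma factor_neg {i : ℕ} (hi : i < n) : 1 - α + (i : ℝ) < 0 := by
  have : (i : ℝ) + 1 ≤ n := by exact_mod_cast hi
  have := hα.1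
  linarith

lemma factor_ne {i : ℕ} (hi : i < n + 1) : 1 - α + (i : ℝ) ≠ 0 := by
  rcases Nat.lt_succ_iff_lt_or_eq.mp hi with h | h
  · exact (factor_neg hα h).ne
  · subst h
    have h2 := hα.2
    have h3 : (0:ℝ) < 1 - α + (i : ℝ) := by linarith
    exact h3.ne'

lemma shift_pos : 0 < (n : ℝ) + 1 - α := by have := hα.2; linarith

lemma shift2_gt_one : 1 < (n : ℝ) + 2 - α := by have := hα.2; linarith

lemma shift2_lt_two : (n : ℝ) + 2 - α < 2 := by have := hα.1; linarith

end facts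

/-- On the interval, `Fn` agrees with the "natural" antiderivative. -/
lemma Fn_eq (n : ℕ) (r : ℝ) {α : ℝ} (hα : α ∈ Set.Ioo (n : ℝ) ((n : ℝ) + 1)) :
    Fn n r α = -Real.log (Real.Gamma (1 - α))
      + (2 * Real.eulerMascheroniConstant + Real.log r) * α
      + (1 / 2) * Real.log α + (α - α * Real.log α) := by
  have hne : ∀ i : ℕ, i < n + 1 → (1 - α) + (i : ℝ) ≠ 0 := fun i hi => factor_ne hα hi
  have hprod := gamma_prod (1 - α) (n + 1) hne
  have harg : (1 - α) + ((n + 1 : ℕ) : ℝ) = (n : ℝ) + 2 - α := by push_cast; ring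
  rw [harg] at hprod
  have hΓne : Real.Gamma (1 - α) ≠ 0 := Real.Gamma_ne_zero (one_sub_nonpole hα)
  have hprodne : ∏ i ∈ Finset.range (n + 1), ((1 - α) + (i : ℝ)) ≠ 0 :=
    Finset.prod_ne_zero_iff.mpr fun i hi => hne i (Finset.mem_range.mp hi)
  have hlog : Real.log (Real.Gamma ((n : ℝ) + 2 - α))
      = Real.log (Real.Gamma (1 - α))
        + ∑ i ∈ Finset.range (n + 1), Real.log ((1 - α) + (i : ℝ)) := by
    rw [hprod, Real.log_mul hΓne hprodne, Real.log_prod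
      (fun i hi => hne i (Finset.mem_range.mp hi))]
  rw [Finset.sum_range_succ,
    show (1 - α) + ((n : ℕ) : ℝ) = (n : ℝ) + 1 - α by push_cast; ring] at hlog
  unfold Fn
  rw [hlog]
  ring


section derivs
variable {n : ℕ} {r : ℝ} {α : ℝ}

/-- Common building blocks. -/
lemma hasDerivAt_rest (h0 : 0 < α) :
    HasDerivAt (fun β : ℝ => (2 * Real.eulerMascheroniConstant + Real.log r) * β
        + (1 / 2) * Real.log β + (β - β * Real.log β))
      (2 * Real.eulerMascheroniConstant + Real.log r + (1 / 2) * α⁻¹ - Real.log α) α := by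
  have h1 : HasDerivAt (fun β : ℝ => (2 * Real.eulerMascheroniConstant + Real.log r) * β)
      (2 * Real.eulerMascheroniConstant + Real.log r) α := by
    simpa using (hasDerivAt_id α).const_mul (2 * Real.eulerMascheroniConstant + Real.log r)
  have h2 : HasDerivAt (fun β : ℝ => (1 / 2) * Real.log β) ((1 / 2) * α⁻¹) α :=
    (Real.hasDerivAt_log h0.ne').const_mul (1 / 2)
  have h3 : HasDerivAt (fun β : ℝ => β * Real.log β) (Real.log α + 1) α := by
    have := (hasDerivAt_id α).mul (Real.hasDerivAt_log h0.ne')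
    convert this using 1
    · rfl
    · rfl
    · rfl
    field_simp
    rw [id_eq]; ring
  have h4 : HasDerivAt (fun β : ℝ => β - β * Real.log β) (1 - (Real.log α + 1)) α :=
    (hasDerivAt_id α).sub h3
  convert (h1.add h2).add h4 using 1
  · rfl
  · rfl
  · rfl
  ring

lemma hasDerivAt_G (hα : α ∈ Set.Ioo (n : ℝ) ((n : ℝ) + 1)) :
    HasDerivAt (fun β : ℝ => -Real.log (Real.Gamma (1 - β))
        + (2 * Real.eulerMascheroniConstant + Real.log r) * β
        + (1 / 2) * Real.log β + (β - β * Real.log β)) (quantF α r) α := by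
  have h0 : 0 < α := alpha_pos hα
  have hinner : HasDerivAt (fun β : ℝ => 1 - β) (-1) α := by
    simpa using (hasDerivAt_id α).const_sub (1 : ℝ)
  have houter := hasDerivAt_logGamma (one_sub_nonpole hα)
  have hcomp : HasDerivAt (fun β : ℝ => Real.log (Real.Gamma (1 - β)))
      (digamma (1 - α) * (-1)) α := houter.comp α hinner
  have := (hcomp.neg.add (hasDerivAt_rest (r := r) h0))
  convert this using 1
  · rfl
  · rfl
  · ext β; simp only [Pi.add_apply, Pi.neg_apply]; ring
  · unfold quantF; field_simp; ring

lemma hasDerivAt_Fn (hα : α ∈ Set.Ioo (n : ℝ) ((n : ℝ) + 1)) :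
    HasDerivAt (Fn n r) (quantF α r) α := by
  refine (hasDerivAt_G hα).congr_of_eventuallyEq ?_
  filter_upwards [isOpen_Ioo.mem_nhds hα] with β hβ
  exact Fn_eq n r hβ

lemma hasDerivAt_Fn' (hα : α ∈ Set.Ioo (n : ℝ) ((n : ℝ) + 1)) :
    HasDerivAt (Fn n r) (Dn n r α) α := by
  have h0 : 0 < α := alpha_pos hα
  -- first piece: -log Γ (n+2-β)
  have hinner : HasDerivAt (fun β : ℝ => (n : ℝ) + 2 - β) (-1) α := by
    simpa using (hasDerivAt_id α).const_sub ((n : ℝ) + 2)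
  have houter := hasDerivAt_logGamma (pos_nonpole (lt_trans one_pos (shift2_gt_one hα)))
  have h1 : HasDerivAt (fun β : ℝ => Real.log (Real.Gamma ((n : ℝ) + 2 - β)))
      (digamma ((n : ℝ) + 2 - α) * (-1)) α := houter.comp α hinner
  -- second piece: log (n+1-β)
  have h2inner : HasDerivAt (fun β : ℝ => (n : ℝ) + 1 - β) (-1) α := by
    simpa using (hasDerivAt_id α).const_sub ((n : ℝ) + 1)
  have h2 : HasDerivAt (fun β : ℝ => Real.log ((n : ℝ) + 1 - β))
      (-1 / ((n : ℝ) + 1 - α)) α := h2inner.log (shift_pos hα).ne'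
  -- sum piece
  have h3 : HasDerivAt (fun β : ℝ => ∑ i ∈ Finset.range n, Real.log (1 - β + (i : ℝ)))
      (∑ i ∈ Finset.range n, -1 / (1 - α + (i : ℝ))) α := by
    apply HasDerivAt.fun_sum
    intro i hi
    have hiinner : HasDerivAt (fun β : ℝ => 1 - β + (i : ℝ)) (-1) α := by
      simpa using ((hasDerivAt_id α).const_sub (1 : ℝ)).add_const ((i : ℝ))
    exact hiinner.log (factor_neg hα (Finset.mem_range.mp hi)).ne
  have := ((h1.neg.add h2).add h3).add (hasDerivAt_rest (r := r) h0)
  convert this using 1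
  · rfl
  · rfl
  · ext β; unfold Fn; simp only [Pi.add_apply, Pi.neg_apply]; ring
  · unfold Dn
    rw [show (∑ i ∈ Finset.range n, -1 / (1 - α + (i : ℝ)))
        = -∑ i ∈ Finset.range n, 1 / (1 - α + (i : ℝ)) by
      rw [← Finset.sum_neg_distrib]; congr 1; ext i; ring]
    field_simp
    ring

lemma quantF_eq_Dn (hα : α ∈ Set.Ioo (n : ℝ) ((n : ℝ) + 1)) :
    quantF α r = Dn n r α :=
  (hasDerivAt_Fn hα).unique (hasDerivAt_Fn' hα)

end derivs

lemma concaveOn_comp_const_sub {f : ℝ → ℝ} {s t : Set ℝ} (hf : ConcaveOn ℝ s f) (c : ℝ)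
    (ht : Convex ℝ t) (h : ∀ x ∈ t, c - x ∈ s) : ConcaveOn ℝ t fun x => f (c - x) := by
  refine ⟨ht, fun x hx y hy a b ha hb hab => ?_⟩
  have h2 := hf.2 (h x hx) (h y hy) ha hb hab
  have he : c - (a • x + b • y) = a • (c - x) + b • (c - y) := by
    simp only [smul_eq_mul]; linear_combination -c * hab
  show a • f (c - x) + b • f (c - y) ≤ f (c - (a • x + b • y))
  rw [he]; exact h2

lemma concaveOn_comp_sub_const {f : ℝ → ℝ} {s t : Set ℝ} (hf : ConcaveOn ℝ s f) (c : ℝ)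
    (ht : Convex ℝ t) (h : ∀ x ∈ t, x - c ∈ s) : ConcaveOn ℝ t fun x => f (x - c) := by
  refine ⟨ht, fun x hx y hy a b ha hb hab => ?_⟩
  have h2 := hf.2 (h x hx) (h y hy) ha hb hab
  have he : (a • x + b • y) - c = a • (x - c) + b • (y - c) := by
    simp only [smul_eq_mul]; linear_combination c * hab
  show a • f (x - c) + b • f (y - c) ≤ f ((a • x + b • y) - c)
  rw [he]; exact h2

lemma concaveOn_mul_id (s : Set ℝ) (hs : Convex ℝ s) (c : ℝ) :
    ConcaveOn ℝ s (fun x => c * x) := by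
  refine ⟨hs, fun x _ y _ a b _ _ _ => ?_⟩
  simp only [smul_eq_mul]
  exact le_of_eq (by ring)

lemma concaveOn_sum {ι : Type*} (u : Finset ι) {s : Set ℝ} (hs : Convex ℝ s)
    {f : ι → ℝ → ℝ} (h : ∀ i ∈ u, ConcaveOn ℝ s (f i)) :
    ConcaveOn ℝ s (fun x => ∑ i ∈ u, f i x) := by
  classical
  induction u using Finset.induction_on with
  | empty => simpa using concaveOn_const 0 hs
  | insert j u' hnot ih =>
    simp only [Finset.sum_insert hnot]
    exact (h j (Finset.mem_insert_self j u')).add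
      (ih fun i hi => h i (Finset.mem_insert_of_mem hi))

/-- `α ↦ α - α log α` is strictly concave on any convex subset of `(0,∞)`. -/
lemma strictConcaveOn_entropy {s : Set ℝ} (hs : Convex ℝ s) (hsub : s ⊆ Ioi 0)
    (hopen : IsOpen s) : StrictConcaveOn ℝ s (fun α => α - α * Real.log α) := by
  refine StrictAntiOn.strictConcaveOn_of_deriv hs ?_ ?_
  · exact continuousOn_id.sub (continuousOn_id.mul
      (Real.continuousOn_log.mono fun x hx => (hsub hx).ne'))
  · rw [hopen.interior_eq]
    have hderiv : ∀ x ∈ s, deriv (fun α : ℝ => α - α * Real.log α) x = -Real.log x := by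
      intro x hx
      have h0 : (0:ℝ) < x := hsub hx
      have h3 : HasDerivAt (fun β : ℝ => β * Real.log β) (Real.log x + 1) x := by
        have := (hasDerivAt_id x).mul (Real.hasDerivAt_log h0.ne')
        convert this using 1
        · rfl
        · rfl
        · rfl
        field_simp
        rw [id_eq]; ring
      have h4 : HasDerivAt (fun β : ℝ => β - β * Real.log β) (-Real.log x) x := by
        have := (hasDerivAt_id x).sub h3
        convert this using 1
        · rfl
        · rfl
        · rfl
        ring
      exact h4.deriv
    intro x hx y hy hxy
    rw [hderiv x hx, hderiv y hy]
    have := Real.log_lt_log (hsub hx) hxy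
    linarith


lemma concaveOn_const_mul {f : ℝ → ℝ} {s : Set ℝ} (hf : ConcaveOn ℝ s f) {c : ℝ}
    (hc : 0 ≤ c) : ConcaveOn ℝ s (fun x => c * f x) := by
  refine ⟨hf.1, fun x hx y hy a b ha hb hab => ?_⟩
  have h2 := hf.2 hx hy ha hb hab
  simp only [smul_eq_mul] at *
  calc a * (c * f x) + b * (c * f y) = c * (a * f x + b * f y) := by ring
    _ ≤ c * f (a * x + b * y) := mul_le_mul_of_nonneg_left h2 hc

lemma strictConcaveOn_Fn (n : ℕ) (r : ℝ) :
    StrictConcaveOn ℝ (Set.Ioo (n : ℝ) ((n : ℝ) + 1)) (Fn n r) := by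
  set s : Set ℝ := Set.Ioo (n : ℝ) ((n : ℝ) + 1) with hs_def
  have hs : Convex ℝ s := convex_Ioo _ _
  have hsub : s ⊆ Ioi 0 := fun x hx => lt_of_le_of_lt n.cast_nonneg hx.1
  have hbase : ConcaveOn ℝ (Ioi (0:ℝ)) (fun x : ℝ => -Real.log (Real.Gamma x)) :=
    Real.convexOn_log_Gamma.neg
  have c1 : ConcaveOn ℝ s (fun α => -Real.log (Real.Gamma ((n : ℝ) + 2 - α))) :=
    concaveOn_comp_const_sub hbase ((n : ℝ) + 2) hs
      (fun x hx => by have := hx.2; simp only [mem_Ioi]; linarith)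
  have c2 : ConcaveOn ℝ s (fun α => Real.log ((n : ℝ) + 1 - α)) :=
    concaveOn_comp_const_sub strictConcaveOn_log_Ioi.concaveOn ((n : ℝ) + 1) hs
      (fun x hx => by have := hx.2; simp only [mem_Ioi]; linarith)
  have c3 : ConcaveOn ℝ s (fun α => ∑ i ∈ Finset.range n, Real.log (1 - α + (i : ℝ))) := by
    refine concaveOn_sum _ hs fun i hi => ?_
    have hi' : (i : ℝ) + 1 ≤ n := by exact_mod_cast Finset.mem_range.mp hi
    have heq : (fun α : ℝ => Real.log (1 - α + (i : ℝ)))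
        = fun α : ℝ => Real.log (α - (1 + (i : ℝ))) := by
      funext β
      rw [show (1 : ℝ) - β + (i : ℝ) = -(β - (1 + (i : ℝ))) by ring, Real.log_neg_eq_log]
    rw [heq]
    exact concaveOn_comp_sub_const strictConcaveOn_log_Ioi.concaveOn (1 + (i : ℝ)) hs
      (fun x hx => by have := hx.1; simp only [mem_Ioi]; linarith)
  have c4 : ConcaveOn ℝ s (fun α => (2 * Real.eulerMascheroniConstant + Real.log r) * α) :=
    concaveOn_mul_id s hs _
  have c5 : ConcaveOn ℝ s (fun α => (1 / 2) * Real.log α) :=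
    concaveOn_const_mul ((strictConcaveOn_log_Ioi.concaveOn).subset hsub hs) (by norm_num)
  have hstrict : StrictConcaveOn ℝ s (fun α => α - α * Real.log α) :=
    strictConcaveOn_entropy hs hsub isOpen_Ioo
  have hrest := (((c1.add c2).add c3).add c4).add c5
  have hall := hstrict.add_concaveOn hrest
  have heq : Fn n r = (fun α : ℝ => α - α * Real.log α)
      + (((((fun α : ℝ => -Real.log (Real.Gamma ((n : ℝ) + 2 - α)))
        + fun α : ℝ => Real.log ((n : ℝ) + 1 - α))
        + fun α : ℝ => ∑ i ∈ Finset.range n, Real.log (1 - α + (i : ℝ)))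
        + fun α : ℝ => (2 * Real.eulerMascheroniConstant + Real.log r) * α)
        + fun α : ℝ => (1 / 2) * Real.log α) := by
    funext α
    simp only [Fn, Pi.add_apply]
    ring
  rw [heq]
  exact hall

lemma strictAntiOn_quantF (n : ℕ) (r : ℝ) :
    StrictAntiOn (fun α => quantF α r) (Set.Ioo (n : ℝ) ((n : ℝ) + 1)) := by
  intro x hx y hy hxy
  have h1 := (strictConcaveOn_Fn n r).lt_slope_of_hasDerivAt hx hy hxy (hasDerivAt_Fn hy)
  have h2 := (strictConcaveOn_Fn n r).slope_lt_of_hasDerivAt hx hy hxy (hasDerivAt_Fn hx)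
  exact h1.trans h2


/-- digamma bounds on `[1,2]`. -/
lemma digamma_bounds {y : ℝ} (h1 : 1 ≤ y) (h2 : y ≤ 2) :
    digamma 1 ≤ digamma y ∧ digamma y ≤ digamma 2 := by
  have hy : y ∈ Set.Ioi (0 : ℝ) := by simp only [mem_Ioi]; linarith
  constructor
  · exact digamma_monotone (by norm_num) hy h1
  · exact digamma_monotone hy (by norm_num) h2

lemma small_pos (M : ℝ) : ∃ δ : ℝ, 0 < δ ∧ δ ≤ 1 / 4 ∧ M + 1 ≤ 1 / (2 * δ) := by
  set δ := min (1 / 4 : ℝ) (1 / (2 * (|M| + 1))) with hδdef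
  have hM : (0 : ℝ) < |M| + 1 := by positivity
  have hδ0 : 0 < δ := lt_min (by norm_num) (by positivity)
  refine ⟨δ, hδ0, min_le_left _ _, ?_⟩
  have h2 : δ ≤ 1 / (2 * (|M| + 1)) := min_le_right _ _
  have h3 : δ * (2 * (|M| + 1)) ≤ 1 := by
    rw [← le_div_iff₀ (by positivity)]; exact h2
  rw [le_div_iff₀ (by positivity)]
  nlinarith [le_abs_self M, hδ0.le]

lemma exists_pos_point (n : ℕ) (r : ℝ) :
    ∃ x₀ ∈ Set.Ioo (n : ℝ) ((n : ℝ) + 1), x₀ ≤ (n : ℝ) + 1 / 4 ∧ 0 < quantF x₀ r := by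
  obtain ⟨δ, hδ0, hδ4, hδm⟩ :=
    small_pos (-(digamma 1 + 2 * Real.eulerMascheroniConstant + Real.log r - 2
      - Real.log ((n : ℝ) + 1)))
  set x₀ : ℝ := (n : ℝ) + δ with hx₀def
  have hx₀ : x₀ ∈ Set.Ioo (n : ℝ) ((n : ℝ) + 1) := ⟨by linarith, by linarith⟩
  have hx₀pos : 0 < x₀ := lt_of_le_of_lt n.cast_nonneg hx₀.1
  refine ⟨x₀, hx₀, by linarith, ?_⟩
  have hD := quantF_eq_Dn (r := r) hx₀
  unfold Dn at hD
  rw [show (n : ℝ) + 2 - x₀ = 2 - δ by rw [hx₀def]; ring,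
      show (n : ℝ) + 1 - x₀ = 1 - δ by rw [hx₀def]; ring] at hD
  -- term bounds
  have t1 : digamma 1 ≤ digamma (2 - δ) := (digamma_bounds (by linarith) (by linarith)).1
  have t2 : 1 / (1 - δ) ≤ 2 := by
    rw [div_le_iff₀ (by linarith)]; linarith
  have t3 : 1 / (2 * δ) ≤ -(∑ i ∈ Finset.range n, 1 / (1 - x₀ + (i : ℝ))) + 1 / (2 * x₀) := by
    rcases Nat.eq_zero_or_pos n with rfl | hn
    · simp only [Finset.range_zero, Finset.sum_empty, neg_zero, zero_add]
      rw [show x₀ = δ by rw [hx₀def]; norm_num]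
    · obtain ⟨p, rfl⟩ : ∃ p, n = p + 1 := ⟨n - 1, (Nat.succ_pred_eq_of_pos hn).symm⟩
      have hsum : ∑ i ∈ Finset.range (p + 1), 1 / (1 - x₀ + (i : ℝ))
          = (∑ i ∈ Finset.range p, 1 / (1 - x₀ + (i : ℝ))) + 1 / (1 - x₀ + (p : ℝ)) :=
        Finset.sum_range_succ _ _
      have hx₀p : (1 : ℝ) - x₀ + (p : ℝ) = -δ := by
        rw [hx₀def]; push_cast; ring
      have hlast : 1 / ((1 : ℝ) - x₀ + (p : ℝ)) = -(1 / δ) := by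
        rw [hx₀p, div_neg]
      have hrest : ∑ i ∈ Finset.range p, 1 / (1 - x₀ + (i : ℝ)) ≤ 0 := by
        apply Finset.sum_nonpos
        intro i hi
        have hi' : (i : ℝ) + 1 ≤ p := by exact_mod_cast Finset.mem_range.mp hi
        have hneg : (1 : ℝ) - x₀ + (i : ℝ) < 0 := by
          rw [hx₀def]; push_cast; linarith
        exact le_of_lt (div_neg_of_pos_of_neg one_pos hneg)
      have h2δ : 1 / (2 * δ) ≤ 1 / δ := by
        apply one_div_le_one_div_of_le hδ0; linarith
      have hx2 : 0 ≤ 1 / (2 * x₀) := by positivity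
      rw [hsum, hlast]
      linarith
  have t4 : Real.log x₀ ≤ Real.log ((n : ℝ) + 1) := by
    apply Real.log_le_log hx₀pos; linarith
  have t6 : |(-(digamma 1 + 2 * Real.eulerMascheroniConstant + Real.log r - 2
      - Real.log ((n : ℝ) + 1)))| ≥ -(-(digamma 1 + 2 * Real.eulerMascheroniConstant
      + Real.log r - 2 - Real.log ((n : ℝ) + 1))) := neg_le_abs _
  rw [hD]
  nlinarith [abs_nonneg (-(digamma 1 + 2 * Real.eulerMascheroniConstant + Real.log r - 2
      - Real.log ((n : ℝ) + 1)))]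

lemma exists_neg_point (n : ℕ) (r : ℝ) (hr0 : 0 < r) (hr1 : r < 1) :
    ∃ y₀ ∈ Set.Ioo (n : ℝ) ((n : ℝ) + 1), (n : ℝ) + 3 / 4 ≤ y₀ ∧ quantF y₀ r < 0 := by
  obtain ⟨ε, hε0, hε4, hεm⟩ :=
    small_pos (digamma 2 + 2 * Real.eulerMascheroniConstant + 2 * (n : ℝ) + 1 + Real.log 2)
  set y₀ : ℝ := (n : ℝ) + 1 - ε with hy₀def
  have hy₀ : y₀ ∈ Set.Ioo (n : ℝ) ((n : ℝ) + 1) := ⟨by linarith, by linarith⟩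
  have hy₀pos : (3:ℝ) / 4 ≤ y₀ := by
    have : (0:ℝ) ≤ (n : ℝ) := n.cast_nonneg
    linarith
  refine ⟨y₀, hy₀, by linarith, ?_⟩
  have hD := quantF_eq_Dn (r := r) hy₀
  unfold Dn at hD
  rw [show (n : ℝ) + 2 - y₀ = 1 + ε by rw [hy₀def]; ring,
      show (n : ℝ) + 1 - y₀ = ε by rw [hy₀def]; ring] at hD
  have u1 : digamma (1 + ε) ≤ digamma 2 := (digamma_bounds (by linarith) (by linarith)).2
  have u3 : -(∑ i ∈ Finset.range n, 1 / (1 - y₀ + (i : ℝ))) ≤ 2 * (n : ℝ) := by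
    rw [← Finset.sum_neg_distrib]
    have hbd : ∀ i ∈ Finset.range n, -(1 / (1 - y₀ + (i : ℝ))) ≤ 2 := by
      intro i hi
      have hi' : (i : ℝ) + 1 ≤ n := by exact_mod_cast Finset.mem_range.mp hi
      have hpos : (0:ℝ) < y₀ - 1 - (i : ℝ) := by rw [hy₀def]; linarith
      rw [show (1:ℝ) - y₀ + (i : ℝ) = -(y₀ - 1 - (i : ℝ)) by ring, div_neg, neg_neg,
        div_le_iff₀ hpos]
      rw [hy₀def]; rw [hy₀def] at hpos; linarith
    calc ∑ i ∈ Finset.range n, -(1 / (1 - y₀ + (i : ℝ)))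
        ≤ ∑ _i ∈ Finset.range n, (2:ℝ) := Finset.sum_le_sum hbd
      _ = 2 * (n : ℝ) := by rw [Finset.sum_const, Finset.card_range]; push_cast; ring
  have u4 : 1 / (2 * y₀) ≤ 1 := by
    rw [div_le_iff₀ (by linarith)]; linarith
  have u5 : -Real.log y₀ ≤ Real.log 2 := by
    have h := Real.log_le_log (by norm_num : (0:ℝ) < 1/2) (by linarith : (1:ℝ)/2 ≤ y₀)
    rw [show (1:ℝ)/2 = 2⁻¹ by norm_num, Real.log_inv] at h
    linarith
  have u6 : Real.log r ≤ 0 := (Real.log_neg hr0 hr1).le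
  have h2ε : 1 / (2 * ε) ≤ 1 / ε := by
    apply one_div_le_one_div_of_le hε0; linarith
  rw [hD]
  linarith

lemma exists_zero (n : ℕ) (r : ℝ) (hr0 : 0 < r) (hr1 : r < 1) :
    ∃ c ∈ Set.Ioo (n : ℝ) ((n : ℝ) + 1), quantF c r = 0 := by
  obtain ⟨x₀, hx₀, hx₀le, hx₀pos⟩ := exists_pos_point n r
  obtain ⟨y₀, hy₀, hy₀ge, hy₀neg⟩ := exists_neg_point n r hr0 hr1
  have hxy : x₀ < y₀ := by linarith
  have hsub : Set.Icc x₀ y₀ ⊆ Set.Ioo (n : ℝ) ((n : ℝ) + 1) := fun z hz =>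
    ⟨lt_of_lt_of_le hx₀.1 hz.1, lt_of_le_of_lt hz.2 hy₀.2⟩
  have hder : ∀ z ∈ Set.Icc x₀ y₀,
      HasDerivWithinAt (Fn n r) ((fun α => quantF α r) z) (Set.Icc x₀ y₀) z := fun z hz =>
    (hasDerivAt_Fn (hsub hz)).hasDerivWithinAt
  have hzero : (0:ℝ) ∈ (fun α => quantF α r) '' Set.Ioo x₀ y₀ :=
    exists_hasDerivWithinAt_eq_of_lt_of_gt hxy.le hder hx₀pos hy₀neg
  obtain ⟨c, hc, hc0⟩ := hzero
  exact ⟨c, ⟨lt_trans hx₀.1 hc.1, lt_trans hc.2 hy₀.2⟩, hc0⟩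

end QuantAux

/-- For every `r ∈ (0,1)` and every positive integer `k`, the function
`f(·, r)` is strictly decreasing on `(k−1, k)` and has a unique zero
`α_k ∈ (k−1, k)`. -/
theorem quantF_unique_zero :
    ∀ r : ℝ, 0 < r → r < 1 → ∀ k : ℕ, 0 < k →
      StrictAntiOn (fun α => quantF α r) (Ioo ((k : ℝ) - 1) (k : ℝ)) ∧
      ∃! α : ℝ, α ∈ Ioo ((k : ℝ) - 1) (k : ℝ) ∧ quantF α r = 0 := by
  intro r hr0 hr1 k hk
  obtain ⟨n, rfl⟩ : ∃ n, k = n + 1 := ⟨k - 1, (Nat.succ_pred_eq_of_pos hk).symm⟩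
  have hcast : ((n + 1 : ℕ) : ℝ) - 1 = (n : ℝ) := by push_cast; ring
  have hcast2 : ((n + 1 : ℕ) : ℝ) = (n : ℝ) + 1 := by push_cast; ring
  rw [hcast, hcast2]
  have hanti := QuantAux.strictAntiOn_quantF n r
  refine ⟨hanti, ?_⟩
  obtain ⟨c, hc, hc0⟩ := QuantAux.exists_zero n r hr0 hr1
  refine ⟨c, ⟨hc, hc0⟩, ?_⟩
  rintro d ⟨hd, hd0⟩
  by_contra hne
  rcases lt_or_gt_of_ne hne with h | h
  · have := hanti hd hc h
    simp only [hc0, hd0] at this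
    exact lt_irrefl 0 this
  · have := hanti hc hd h
    simp only [hc0, hd0] at this
    exact lt_irrefl 0 this
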